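/- arXiv:1202.2717 — 2 statements merged into one kernel-verified Lean document; each statement's English description precedes it below -/
import Mathlib

section
/- Let A be a double Poisson algebra (an associative algebra with a double bracket {{-,-}} satisfying skew-symmetry {{a,b}} = -{{b,a}}° and the double Jacobi identity). Then the induced bracket {a,b} := μ({{a,b}}) descends to a well-defined Lie bracket on the commutator quotient A/[A,A]. -/
open scoped TensorProduct

/-- The `k`-linear span of commutators `ab - ba` in an algebra `A`. -/
def commutatorSpan (k A : Type) [Field k] [Ring A] [Algebra k A] : Submodule k A :=
  Submodule.span k {x : A | ∃ a b : A, x = a * b - b * a}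

/-- `{{x, b₁ ⊗ b₂}}_L := {{x, b₁}} ⊗ b₂`, viewed as a map `A ⊗ A → A ⊗ (A ⊗ A)`. -/
noncomputable def doubleBracketL (k A : Type) [Field k] [Ring A] [Algebra k A]
    (D : A →ₗ[k] A →ₗ[k] A ⊗[k] A) (x : A) :
    A ⊗[k] A →ₗ[k] A ⊗[k] (A ⊗[k] A) :=
  (TensorProduct.assoc k A A A).toLinearMap ∘ₗ LinearMap.rTensor A (D x)

/-- The cyclic permutation `σ(123)` of three tensor factors: `b₁ ⊗ b₂ ⊗ b₃ ↦ b₃ ⊗ b₁ ⊗ b₂`. -/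
noncomputable def cyc123 (k A : Type) [Field k] [Ring A] [Algebra k A] :
    A ⊗[k] (A ⊗[k] A) →ₗ[k] A ⊗[k] (A ⊗[k] A) :=
  (TensorProduct.comm k (A ⊗[k] A) A).toLinearMap ∘ₗ
    (TensorProduct.assoc k A A A).symm.toLinearMap

namespace Stmt4Aux

variable (k A : Type) [Field k] [Ring A] [Algebra k A]

/-- Quotient map to the commutator quotient. -/
noncomputable abbrev cq : A →ₗ[k] A ⧸ commutatorSpan k A := (commutatorSpan k A).mkQ

lemma mem_commutatorSpan (a b : A) : a * b - b * a ∈ commutatorSpan k A :=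
  Submodule.subset_span ⟨a, b, rfl⟩

lemma cq_comm (a b : A) : cq k A (a * b) = cq k A (b * a) := by
  rw [← sub_eq_zero, ← map_sub, Submodule.mkQ_apply, Submodule.Quotient.mk_eq_zero]
  exact mem_commutatorSpan k A a b

/-- Multiplication map `μ`. -/
noncomputable abbrev mu : A ⊗[k] A →ₗ[k] A := LinearMap.mul' k A

lemma mu_right (t : A ⊗[k] A) (c : A) : mu k A (t * ((1 : A) ⊗ₜ[k] c)) = mu k A t * c := by
  induction t using TensorProduct.induction_on with
  | zero => simp
  | tmul x y => simp [Algebra.TensorProduct.tmul_mul_tmul, mul_assoc]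
  | add s t hs ht => simp only [add_mul, map_add, hs, ht]

lemma mu_left (b : A) (t : A ⊗[k] A) : mu k A ((b ⊗ₜ[k] (1 : A)) * t) = b * mu k A t := by
  induction t using TensorProduct.induction_on with
  | zero => simp
  | tmul x y => simp [Algebra.TensorProduct.tmul_mul_tmul, mul_assoc]
  | add s t hs ht => simp only [mul_add, map_add, hs, ht]

lemma cq_mu_comm (t : A ⊗[k] A) :
    cq k A (mu k A ((TensorProduct.comm k A A) t)) = cq k A (mu k A t) := by
  induction t using TensorProduct.induction_on with
  | zero => simp
  | tmul x y => simpa using cq_comm k A y x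
  | add s t hs ht => simp only [map_add, hs, ht]

/-- The map `μ₃ : A ⊗ (A ⊗ A) → A` multiplying all three factors. -/
noncomputable abbrev mu3 : A ⊗[k] (A ⊗[k] A) →ₗ[k] A :=
  mu k A ∘ₗ LinearMap.lTensor A (mu k A)

lemma mu3_tmul (a b c : A) : mu3 k A (a ⊗ₜ[k] (b ⊗ₜ[k] c)) = a * (b * c) := by
  simp [mu3]

lemma cyc123_tmul (a b c : A) :
    cyc123 k A (a ⊗ₜ[k] (b ⊗ₜ[k] c)) = c ⊗ₜ[k] (a ⊗ₜ[k] b) := by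
  simp [cyc123]

lemma cq_mu3_cyc (t : A ⊗[k] (A ⊗[k] A)) :
    cq k A (mu3 k A (cyc123 k A t)) = cq k A (mu3 k A t) := by
  induction t using TensorProduct.induction_on with
  | zero => simp
  | tmul x y =>
    induction y using TensorProduct.induction_on with
    | zero => simp
    | tmul b c =>
      rw [cyc123_tmul, mu3_tmul, mu3_tmul, ← mul_assoc x b c]
      exact cq_comm k A c (x * b)
    | add s t hs ht => simp only [TensorProduct.tmul_add, map_add, hs, ht]
  | add s t hs ht => simp only [map_add, hs, ht]

lemma mu3_assoc (s : A ⊗[k] A) (v : A) :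
    mu3 k A ((TensorProduct.assoc k A A A) (s ⊗ₜ[k] v)) = mu k A s * v := by
  induction s using TensorProduct.induction_on with
  | zero =>
    rw [TensorProduct.zero_tmul, LinearEquiv.map_zero, map_zero, map_zero, zero_mul]
  | tmul x y => simp [mul_assoc]
  | add s t hs ht =>
    simp only [TensorProduct.add_tmul, map_add, hs, ht, add_mul]

variable (D : A →ₗ[k] A →ₗ[k] A ⊗[k] A)

/-- `E x t = μ₃ ({{x, t}}_L)`. -/
noncomputable abbrev Ee (x : A) : A ⊗[k] A →ₗ[k] A :=
  mu3 k A ∘ₗ doubleBracketL k A D x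

lemma Ee_tmul (x u v : A) : Ee k A D x (u ⊗ₜ[k] v) = mu k A (D x u) * v := by
  simp only [Ee, LinearMap.comp_apply, doubleBracketL, LinearMap.rTensor_tmul,
    LinearEquiv.coe_coe]
  exact mu3_assoc k A (D x u) v

section WithHyps

variable (hder : ∀ a b c : A,
    D a (b * c) = D a b * ((1 : A) ⊗ₜ[k] c) + (b ⊗ₜ[k] (1 : A)) * D a c)
variable (hskew : ∀ a b : A, D a b = - (TensorProduct.comm k A A) (D b a))

include hskew in
lemma skew_mk (a b : A) : cq k A (mu k A (D a b)) = - cq k A (mu k A (D b a)) := by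
  rw [hskew a b, map_neg, map_neg, cq_mu_comm]

include hder in
lemma hzero (a : A) : ∀ x ∈ commutatorSpan k A, cq k A (mu k A (D a x)) = 0 := by
  intro x hx
  induction hx using Submodule.span_induction with
  | mem x hmem =>
    obtain ⟨b, c, rfl⟩ := hmem
    have expand : cq k A (mu k A (D a (b * c - c * b))) =
        cq k A (mu k A (D a b) * c) + cq k A (b * mu k A (D a c)) -
          (cq k A (mu k A (D a c) * b) + cq k A (c * mu k A (D a b))) := by
      rw [map_sub (D a), hder a b c, hder a c b]
      simp only [map_add, map_sub, mu_right, mu_left]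
    rw [expand, cq_comm k A (mu k A (D a b)) c, cq_comm k A b (mu k A (D a c))]
    abel
  | zero => simp
  | add x y hx hy ihx ihy => simp only [map_add, ihx, ihy, add_zero]
  | smul c x hx ihx => simp only [map_smul, ihx, smul_zero]

include hder in
lemma bracket_congr (b : A) (x y : A) (h : x - y ∈ commutatorSpan k A) :
    cq k A (mu k A (D b x)) = cq k A (mu k A (D b y)) := by
  have : cq k A (mu k A (D b (x - y))) = 0 := hzero k A D hder b _ h
  rw [map_sub (D b), map_sub, map_sub, sub_eq_zero] at this
  exact this

include hder in
/-- Key identity: `π ({x, μ t}) = π (E x t) + π (E x (τ t))`. -/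
lemma key (x : A) (t : A ⊗[k] A) :
    cq k A (mu k A (D x (mu k A t))) =
      cq k A (Ee k A D x t) + cq k A (Ee k A D x ((TensorProduct.comm k A A) t)) := by
  induction t using TensorProduct.induction_on with
  | zero => simp
  | tmul u v =>
    rw [TensorProduct.comm_tmul, Ee_tmul, Ee_tmul, LinearMap.mul'_apply,
      hder x u v, map_add, mu_right, mu_left, map_add,
      cq_comm k A u (mu k A (D x v))]
  | add s t hs ht =>
    simp only [map_add] at hs ht ⊢
    rw [hs, ht]
    abel

variable (hjac : ∀ a b c : A,
    doubleBracketL k A D a (D b c) +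
      cyc123 k A (doubleBracketL k A D b (D c a)) +
      cyc123 k A (cyc123 k A (doubleBracketL k A D c (D a b))) = 0)

include hjac in
lemma jac_q (a b c : A) :
    cq k A (Ee k A D a (D b c)) + cq k A (Ee k A D b (D c a)) +
      cq k A (Ee k A D c (D a b)) = 0 := by
  have h := congrArg (fun t => cq k A (mu3 k A t)) (hjac a b c)
  simp only [map_add, map_zero] at h
  rw [cq_mu3_cyc, cq_mu3_cyc, cq_mu3_cyc] at h
  exact h

include hder hskew hjac in
/-- Cyclic Jacobi identity for the induced bracket in the quotient. -/
lemma cyc_jac (a b c : A) :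
    cq k A (mu k A (D a (mu k A (D b c)))) + cq k A (mu k A (D b (mu k A (D c a)))) +
      cq k A (mu k A (D c (mu k A (D a b)))) = 0 := by
  have hcommD : ∀ b c : A, (TensorProduct.comm k A A) (D b c) = - D c b := by
    intro b c
    rw [hskew c b, neg_neg]
  rw [key k A D hder a (D b c), key k A D hder b (D c a), key k A D hder c (D a b),
    hcommD b c, hcommD c a, hcommD a b]
  simp only [map_neg]
  have h1 := jac_q k A D hjac a b c
  have h2 := jac_q k A D hjac a c b
  calc cq k A (Ee k A D a (D b c)) + -cq k A (Ee k A D a (D c b)) +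
        (cq k A (Ee k A D b (D c a)) + -cq k A (Ee k A D b (D a c))) +
        (cq k A (Ee k A D c (D a b)) + -cq k A (Ee k A D c (D b a)))
      = (cq k A (Ee k A D a (D b c)) + cq k A (Ee k A D b (D c a)) +
          cq k A (Ee k A D c (D a b))) -
        (cq k A (Ee k A D a (D c b)) + cq k A (Ee k A D c (D b a)) +
          cq k A (Ee k A D b (D a c))) := by abel
    _ = 0 := by rw [h1, h2, sub_zero]

end WithHyps

end Stmt4Aux

open Stmt4Aux in
/-- Let `A` be a double Poisson algebra: an associative algebra with a double
bracket `{{-,-}}` (a derivation in its second argument for the outer bimodule structure)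
satisfying skew-symmetry `{{a,b}} = -{{b,a}}°` and the double Jacobi identity.  Then the induced
bracket `{a,b} := μ({{a,b}})` descends to a well-defined Lie bracket on the commutator quotient
`A/[A,A]`. -/
theorem stmt4 (k A : Type) [Field k] [CharZero k] [Ring A] [Algebra k A]
    (D : A →ₗ[k] A →ₗ[k] A ⊗[k] A)
    (hder : ∀ a b c : A,
      D a (b * c) = D a b * ((1 : A) ⊗ₜ[k] c) + (b ⊗ₜ[k] (1 : A)) * D a c)
    (hskew : ∀ a b : A, D a b = - (TensorProduct.comm k A A) (D b a))
    (hjac : ∀ a b c : A,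
      doubleBracketL k A D a (D b c) +
        cyc123 k A (doubleBracketL k A D b (D c a)) +
        cyc123 k A (cyc123 k A (doubleBracketL k A D c (D a b))) = 0) :
    ∃ L : (A ⧸ commutatorSpan k A) →ₗ[k]
        (A ⧸ commutatorSpan k A) →ₗ[k] (A ⧸ commutatorSpan k A),
      (∀ a b : A,
        L (Submodule.Quotient.mk a) (Submodule.Quotient.mk b) =
          Submodule.Quotient.mk (LinearMap.mul' k A (D a b))) ∧
      (∀ x y, L x y = - L y x) ∧
      (∀ x y z, L x (L y z) = L (L x y) z + L y (L x z)) := by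
  classical
  -- first argument also kills commutators
  have hzero' : ∀ b : A, ∀ x ∈ commutatorSpan k A, cq k A (mu k A (D x b)) = 0 := by
    intro b x hx
    rw [skew_mk k A D hskew x b, hzero k A D hder b x hx, neg_zero]
  -- the bilinear map A → A → Q
  let g : A →ₗ[k] A →ₗ[k] A ⧸ commutatorSpan k A := D.compr₂ (cq k A ∘ₗ mu k A)
  have hg : ∀ a b : A, g a b = cq k A (mu k A (D a b)) := fun a b => rfl
  -- lift in the second argument
  let G : A →ₗ[k] (A ⧸ commutatorSpan k A) →ₗ[k] A ⧸ commutatorSpan k A :=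
    { toFun := fun a => (commutatorSpan k A).liftQ (g a)
        (fun x hx => by simpa [hg] using hzero k A D hder a x hx)
      map_add' := by
        intro a b
        refine LinearMap.ext fun q => ?_
        obtain ⟨x, rfl⟩ := Submodule.Quotient.mk_surjective _ q
        simp only [Submodule.liftQ_apply, LinearMap.add_apply, hg, map_add,
          LinearMap.add_apply]
      map_smul' := by
        intro c a
        refine LinearMap.ext fun q => ?_
        obtain ⟨x, rfl⟩ := Submodule.Quotient.mk_surjective _ q
        simp only [Submodule.liftQ_apply, RingHom.id_apply, LinearMap.smul_apply, hg,
          map_smul, LinearMap.smul_apply] }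
  have hG : ∀ (a b : A), G a (Submodule.Quotient.mk b) = cq k A (mu k A (D a b)) := by
    intro a b
    show (commutatorSpan k A).liftQ (g a) _ (Submodule.Quotient.mk b) = _
    rw [Submodule.liftQ_apply]
    rfl
  -- lift in the first argument
  have hGker : ∀ x ∈ commutatorSpan k A, G x = 0 := by
    intro x hx
    refine LinearMap.ext fun q => ?_
    obtain ⟨b, rfl⟩ := Submodule.Quotient.mk_surjective _ q
    rw [hG, LinearMap.zero_apply]
    exact hzero' b x hx
  let L : (A ⧸ commutatorSpan k A) →ₗ[k]
      (A ⧸ commutatorSpan k A) →ₗ[k] A ⧸ commutatorSpan k A :=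
    (commutatorSpan k A).liftQ G (fun x hx => by
      simpa [LinearMap.mem_ker] using hGker x hx)
  have hLmk : ∀ (a : A) (y : A ⧸ commutatorSpan k A),
      L (Submodule.Quotient.mk a) y = G a y := by
    intro a y
    show (commutatorSpan k A).liftQ G _ (Submodule.Quotient.mk a) y = G a y
    rw [Submodule.liftQ_apply]
  have hL : ∀ a b : A,
      L (Submodule.Quotient.mk a) (Submodule.Quotient.mk b) =
        cq k A (mu k A (D a b)) := by
    intro a b
    rw [hLmk, hG]
  refine ⟨L, fun a b => hL a b, ?_, ?_⟩
  · -- skew symmetry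
    intro x y
    obtain ⟨a, rfl⟩ := Submodule.Quotient.mk_surjective _ x
    obtain ⟨b, rfl⟩ := Submodule.Quotient.mk_surjective _ y
    rw [hL, hL, skew_mk k A D hskew]
  · -- Leibniz form of the Jacobi identity
    intro x y z
    obtain ⟨a, rfl⟩ := Submodule.Quotient.mk_surjective _ x
    obtain ⟨b, rfl⟩ := Submodule.Quotient.mk_surjective _ y
    obtain ⟨c, rfl⟩ := Submodule.Quotient.mk_surjective _ z
    rw [hL b c, hL a b, hL a c]
    rw [hLmk a, hLmk b]
    have e1 : G a (cq k A (mu k A (D b c))) =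
        cq k A (mu k A (D a (mu k A (D b c)))) := hG a _
    have e2 : G b (cq k A (mu k A (D a c))) =
        cq k A (mu k A (D b (mu k A (D a c)))) := hG b _
    have e3 : L (cq k A (mu k A (D a b))) (Submodule.Quotient.mk c) =
        cq k A (mu k A (D (mu k A (D a b)) c)) := hL _ _
    rw [e1, e2, e3]
    -- rewrite the middle term using skew symmetry of the double bracket
    have hmem : mu k A (D a c) - (- mu k A (D c a)) ∈ commutatorSpan k A := by
      rw [sub_neg_eq_add, ← Submodule.Quotient.mk_eq_zero (commutatorSpan k A)]
      have : cq k A (mu k A (D a c) + mu k A (D c a)) = 0 := by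
        rw [map_add, skew_mk k A D hskew a c, neg_add_cancel]
      simpa using this
    have hs2 : cq k A (mu k A (D b (mu k A (D a c)))) =
        - cq k A (mu k A (D b (mu k A (D c a)))) := by
      rw [bracket_congr k A D hder b _ _ hmem, map_neg (D b), map_neg, map_neg]
    have hs1 : cq k A (mu k A (D (mu k A (D a b)) c)) =
        - cq k A (mu k A (D c (mu k A (D a b)))) := skew_mk k A D hskew _ _
    rw [hs1, hs2]
    have hc := cyc_jac k A D hder hskew hjac a b c
    rw [add_assoc] at hc
    have hX := eq_neg_of_add_eq_zero_left hc
    rw [hX]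
    abel
end

section
/- Let A be an associative unital algebra over a field k and V a finite-dimensional k-vector space. Then the functor B ↦ Hom_{Alg_k}(A, B ⊗ End(V)) from commutative k-algebras to sets is representable: there is a commutative k-algebra A_V and a natural bijection Hom_{CommAlg_k}(A_V, B) ≅ Hom_{Alg_k}(A, B ⊗ End(V)) for all commutative k-algebras B. -/
open scoped TensorProduct

noncomputable section Stmt19Aux

open MvPolynomial Finset

variable (k : Type) [Field k] (A : Type) [Ring A] [Algebra k A]
variable (E : Type) [Ring E] [Algebra k E] {n : ℕ}

/-- The set of relations. -/
def st19Rel (bE : Module.Basis (Fin n) k E) : Set (MvPolynomial (A × Fin n) k) :=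
  {p | (∃ a : A, ∃ a' : A, ∃ i : Fin n, p = X (a + a', i) - X (a, i) - X (a', i)) ∨
       (∃ c : k, ∃ a : A, ∃ i : Fin n, p = X (c • a, i) - C c * X (a, i)) ∨
       (∃ i : Fin n, p = X ((1 : A), i) - C (bE.repr 1 i)) ∨
       (∃ a : A, ∃ a' : A, ∃ i : Fin n, p = X (a * a', i) -
          ∑ j, ∑ l, C (bE.repr (bE j * bE l) i) * X (a, j) * X (a', l))}

def st19AV (bE : Module.Basis (Fin n) k E) : Type :=
  MvPolynomial (A × Fin n) k ⧸ Ideal.span (st19Rel k A E bE)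

instance st19AVCommRing (bE : Module.Basis (Fin n) k E) : CommRing (st19AV k A E bE) :=
  inferInstanceAs (CommRing (MvPolynomial (A × Fin n) k ⧸ Ideal.span (st19Rel k A E bE)))

instance st19AVAlgebra (bE : Module.Basis (Fin n) k E) : Algebra k (st19AV k A E bE) :=
  inferInstanceAs (Algebra k (MvPolynomial (A × Fin n) k ⧸ Ideal.span (st19Rel k A E bE)))

variable (bE : Module.Basis (Fin n) k E)

/-- The quotient map. -/
def st19q : MvPolynomial (A × Fin n) k →ₐ[k] st19AV k A E bE :=
  Ideal.Quotient.mkₐ k (Ideal.span (st19Rel k A E bE))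

variable {k A E}

lemma st19q_rel {p : MvPolynomial (A × Fin n) k} (hp : p ∈ st19Rel k A E bE) :
    st19q k A E bE p = 0 := by
  simp only [st19q, Ideal.Quotient.mkₐ_eq_mk]
  exact Ideal.Quotient.eq_zero_iff_mem.2 (Ideal.subset_span hp)

lemma st19q_add (a a' : A) (i : Fin n) :
    st19q k A E bE (X (a + a', i)) =
      st19q k A E bE (X (a, i)) + st19q k A E bE (X (a', i)) := by
  have h := st19q_rel bE (p := X (a + a', i) - X (a, i) - X (a', i))
    (Or.inl ⟨a, a', i, rfl⟩)
  rw [map_sub, map_sub, sub_sub, sub_eq_zero] at h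
  simpa using h

lemma st19q_smul (c : k) (a : A) (i : Fin n) :
    st19q k A E bE (X (c • a, i)) =
      algebraMap k _ c * st19q k A E bE (X (a, i)) := by
  have h := st19q_rel bE (p := X (c • a, i) - C c * X (a, i))
    (Or.inr (Or.inl ⟨c, a, i, rfl⟩))
  rw [map_sub, sub_eq_zero, map_mul, ← MvPolynomial.algebraMap_eq, AlgHom.commutes] at h
  exact h

lemma st19q_one (i : Fin n) :
    st19q k A E bE (X ((1 : A), i)) = algebraMap k _ (bE.repr 1 i) := by
  have h := st19q_rel bE (p := X ((1 : A), i) - C (bE.repr 1 i))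
    (Or.inr (Or.inr (Or.inl ⟨i, rfl⟩)))
  rw [map_sub, sub_eq_zero, ← MvPolynomial.algebraMap_eq, AlgHom.commutes] at h
  exact h

lemma st19q_mul (a a' : A) (i : Fin n) :
    st19q k A E bE (X (a * a', i)) =
      ∑ j, ∑ l, algebraMap k _ (bE.repr (bE j * bE l) i) *
        st19q k A E bE (X (a, j)) * st19q k A E bE (X (a', l)) := by
  have h := st19q_rel bE (p := X (a * a', i) -
      ∑ j, ∑ l, C (bE.repr (bE j * bE l) i) * X (a, j) * X (a', l))
    (Or.inr (Or.inr (Or.inr ⟨a, a', i, rfl⟩)))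
  rw [map_sub, sub_eq_zero] at h
  rw [h, map_sum]
  refine Finset.sum_congr rfl fun j _ => ?_
  rw [map_sum]
  refine Finset.sum_congr rfl fun l _ => ?_
  rw [map_mul, map_mul, ← MvPolynomial.algebraMap_eq, AlgHom.commutes]

variable (B : Type) [CommRing B] [Algebra k B]

/-- Forward direction, as a bare function. -/
def st19fwdFun (f : st19AV k A E bE →ₐ[k] B) (a : A) : B ⊗[k] E :=
  ∑ i, f (st19q k A E bE (X (a, i))) ⊗ₜ[k] bE i

lemma st19fwdFun_add (f : st19AV k A E bE →ₐ[k] B) (a a' : A) :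
    st19fwdFun bE B f (a + a') = st19fwdFun bE B f a + st19fwdFun bE B f a' := by
  unfold st19fwdFun
  rw [← Finset.sum_add_distrib]
  refine Finset.sum_congr rfl fun i _ => ?_
  rw [st19q_add, map_add, TensorProduct.add_tmul]

lemma st19fwdFun_smul (f : st19AV k A E bE →ₐ[k] B) (c : k) (a : A) :
    st19fwdFun bE B f (c • a) = c • st19fwdFun bE B f a := by
  unfold st19fwdFun
  rw [Finset.smul_sum]
  refine Finset.sum_congr rfl fun i _ => ?_
  rw [st19q_smul, map_mul, AlgHom.commutes, TensorProduct.smul_tmul', Algebra.smul_def]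

lemma st19fwdFun_one (f : st19AV k A E bE →ₐ[k] B) :
    st19fwdFun bE B f 1 = 1 := by
  unfold st19fwdFun
  have h1 : (1 : B ⊗[k] E) = (1 : B) ⊗ₜ[k] (1 : E) := rfl
  conv_rhs => rw [h1, ← bE.sum_repr (1 : E), TensorProduct.tmul_sum]
  refine Finset.sum_congr rfl fun i _ => ?_
  rw [st19q_one, AlgHom.commutes, TensorProduct.tmul_smul, TensorProduct.smul_tmul',
    ← Algebra.algebraMap_eq_smul_one]

lemma st19fwdFun_mul (f : st19AV k A E bE →ₐ[k] B) (a a' : A) :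
    st19fwdFun bE B f (a * a') = st19fwdFun bE B f a * st19fwdFun bE B f a' := by
  unfold st19fwdFun
  rw [Finset.sum_mul_sum]
  have key : ∀ j l : Fin n,
      (f (st19q k A E bE (X (a, j))) ⊗ₜ[k] bE j) *
        (f (st19q k A E bE (X (a', l))) ⊗ₜ[k] bE l) =
      ∑ i, (algebraMap k B (bE.repr (bE j * bE l) i) *
        f (st19q k A E bE (X (a, j))) * f (st19q k A E bE (X (a', l)))) ⊗ₜ[k] bE i := by
    intro j l
    rw [Algebra.TensorProduct.tmul_mul_tmul]
    conv_lhs => rw [← bE.sum_repr (bE j * bE l), TensorProduct.tmul_sum]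
    refine Finset.sum_congr rfl fun i _ => ?_
    rw [TensorProduct.tmul_smul, TensorProduct.smul_tmul', Algebra.smul_def]
    congr 1
    ring
  calc ∑ i, f (st19q k A E bE (X (a * a', i))) ⊗ₜ[k] bE i
      = ∑ i, (∑ j, ∑ l, algebraMap k B (bE.repr (bE j * bE l) i) *
          f (st19q k A E bE (X (a, j))) * f (st19q k A E bE (X (a', l)))) ⊗ₜ[k] bE i := by
        refine Finset.sum_congr rfl fun i _ => ?_
        rw [st19q_mul, map_sum]
        congr 1
        refine Finset.sum_congr rfl fun j _ => ?_
        rw [map_sum]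
        refine Finset.sum_congr rfl fun l _ => ?_
        rw [map_mul, map_mul, AlgHom.commutes]
    _ = ∑ i, ∑ j, ∑ l, (algebraMap k B (bE.repr (bE j * bE l) i) *
          f (st19q k A E bE (X (a, j))) * f (st19q k A E bE (X (a', l)))) ⊗ₜ[k] bE i := by
        refine Finset.sum_congr rfl fun i _ => ?_
        rw [TensorProduct.sum_tmul]
        refine Finset.sum_congr rfl fun j _ => ?_
        rw [TensorProduct.sum_tmul]
    _ = ∑ j, ∑ l, ∑ i, (algebraMap k B (bE.repr (bE j * bE l) i) *
          f (st19q k A E bE (X (a, j))) * f (st19q k A E bE (X (a', l)))) ⊗ₜ[k] bE i := by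
        rw [Finset.sum_comm]
        refine Finset.sum_congr rfl fun j _ => ?_
        rw [Finset.sum_comm]
    _ = ∑ j, ∑ l, (f (st19q k A E bE (X (a, j))) ⊗ₜ[k] bE j) *
          (f (st19q k A E bE (X (a', l))) ⊗ₜ[k] bE l) := by
        refine Finset.sum_congr rfl fun j _ => Finset.sum_congr rfl fun l _ => ?_
        rw [key]

/-- The forward direction: from algebra maps out of `AV` to algebra maps `A → B ⊗ E`. -/
def st19fwd (f : st19AV k A E bE →ₐ[k] B) : A →ₐ[k] B ⊗[k] E :=
  AlgHom.ofLinearMap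
    { toFun := st19fwdFun bE B f
      map_add' := st19fwdFun_add bE B f
      map_smul' := st19fwdFun_smul bE B f }
    (st19fwdFun_one bE B f) (st19fwdFun_mul bE B f)

lemma st19fwd_apply (f : st19AV k A E bE →ₐ[k] B) (a : A) :
    st19fwd bE B f a = ∑ i, f (st19q k A E bE (X (a, i))) ⊗ₜ[k] bE i := rfl

/-- Coordinates of an algebra map `A → B ⊗ E` w.r.t. the base-changed basis. -/
def st19co (Φ : A →ₐ[k] B ⊗[k] E) (a : A) (i : Fin n) : B :=
  (bE.baseChange B).repr (Φ a) i

lemma st19co_sum (Φ : A →ₐ[k] B ⊗[k] E) (a : A) :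
    ∑ i, st19co bE B Φ a i ⊗ₜ[k] bE i = Φ a := by
  conv_rhs => rw [← (bE.baseChange B).sum_repr (Φ a)]
  refine Finset.sum_congr rfl fun i _ => ?_
  rw [Module.Basis.baseChange_apply, TensorProduct.smul_tmul', smul_eq_mul, mul_one]
  rfl

lemma st19co_tmul (x : B) (m : E) (i : Fin n) :
    (bE.baseChange B).repr (x ⊗ₜ[k] m) i = algebraMap k B (bE.repr m i) * x := by
  rw [Module.Basis.baseChange_repr_tmul, Algebra.smul_def]

lemma st19co_add (Φ : A →ₐ[k] B ⊗[k] E) (a a' : A) (i : Fin n) :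
    st19co bE B Φ (a + a') i = st19co bE B Φ a i + st19co bE B Φ a' i := by
  unfold st19co; rw [map_add, map_add]; rfl

lemma st19co_smul (Φ : A →ₐ[k] B ⊗[k] E) (c : k) (a : A) (i : Fin n) :
    st19co bE B Φ (c • a) i = algebraMap k B c * st19co bE B Φ a i := by
  have h : Φ (c • a) = (algebraMap k B c) • Φ a := by
    rw [map_smul, algebraMap_smul]
  unfold st19co
  rw [h, map_smul, Finsupp.smul_apply, smul_eq_mul]

lemma st19co_one (Φ : A →ₐ[k] B ⊗[k] E) (i : Fin n) :
    st19co bE B Φ 1 i = algebraMap k B (bE.repr 1 i) := by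
  unfold st19co
  rw [map_one]
  have h1 : (1 : B ⊗[k] E) = (1 : B) ⊗ₜ[k] (1 : E) := rfl
  rw [h1, st19co_tmul, mul_one]

lemma st19co_mul (Φ : A →ₐ[k] B ⊗[k] E) (a a' : A) (i : Fin n) :
    st19co bE B Φ (a * a') i =
      ∑ j, ∑ l, algebraMap k B (bE.repr (bE j * bE l) i) *
        st19co bE B Φ a j * st19co bE B Φ a' l := by
  have key : Φ (a * a') = ∑ j, ∑ l,
      (st19co bE B Φ a j * st19co bE B Φ a' l) ⊗ₜ[k] (bE j * bE l) := by
    rw [map_mul, ← st19co_sum bE B Φ a, ← st19co_sum bE B Φ a', Finset.sum_mul_sum]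
    exact Finset.sum_congr rfl fun j _ => Finset.sum_congr rfl fun l _ =>
      Algebra.TensorProduct.tmul_mul_tmul _ _ _ _
  conv_lhs => rw [st19co, key]
  rw [map_sum, Finset.sum_apply']
  refine Finset.sum_congr rfl fun j _ => ?_
  rw [map_sum, Finset.sum_apply']
  refine Finset.sum_congr rfl fun l _ => ?_
  rw [st19co_tmul]
  ring

/-- Backward direction, on the polynomial algebra. -/
def st19bwdAux (Φ : A →ₐ[k] B ⊗[k] E) : MvPolynomial (A × Fin n) k →ₐ[k] B :=
  aeval (fun p : A × Fin n => st19co bE B Φ p.1 p.2)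

lemma st19bwdAux_vanish (Φ : A →ₐ[k] B ⊗[k] E) :
    ∀ p ∈ Ideal.span (st19Rel k A E bE), st19bwdAux bE B Φ p = 0 := by
  intro p hp
  have hle : Ideal.span (st19Rel k A E bE) ≤ RingHom.ker (st19bwdAux bE B Φ) := by
    rw [Ideal.span_le]
    intro q hq
    simp only [st19Rel, Set.mem_setOf_eq] at hq
    rcases hq with ⟨a, a', i, rfl⟩ | ⟨c, a, i, rfl⟩ | ⟨i, rfl⟩ | ⟨a, a', i, rfl⟩ <;>
      simp only [SetLike.mem_coe, RingHom.mem_ker, map_sub, map_mul, map_sum,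
        st19bwdAux, aeval_X, aeval_C, sub_eq_zero]
    · rw [sub_eq_iff_eq_add, st19co_add bE B Φ a a' i, add_comm]
    · exact st19co_smul bE B Φ c a i
    · exact st19co_one bE B Φ i
    · exact st19co_mul bE B Φ a a' i
  exact hle hp

/-- The backward direction. -/
def st19bwd (Φ : A →ₐ[k] B ⊗[k] E) : st19AV k A E bE →ₐ[k] B :=
  Ideal.Quotient.liftₐ (Ideal.span (st19Rel k A E bE)) (st19bwdAux bE B Φ)
    (st19bwdAux_vanish bE B Φ)

lemma st19bwd_q (Φ : A →ₐ[k] B ⊗[k] E) (a : A) (i : Fin n) :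
    st19bwd bE B Φ (st19q k A E bE (X (a, i))) = st19co bE B Φ a i := by
  show ((st19bwd bE B Φ).comp (st19q k A E bE)) (X (a, i)) = _
  unfold st19bwd st19q
  erw [Ideal.Quotient.liftₐ_comp]
  unfold st19bwdAux
  rw [aeval_X]

lemma st19_left_inv (f : st19AV k A E bE →ₐ[k] B) :
    st19bwd bE B (st19fwd bE B f) = f := by
  have hsurj := Ideal.Quotient.mkₐ_surjective k (Ideal.span (st19Rel k A E bE))
  have hcomp : (st19bwd bE B (st19fwd bE B f)).comp (st19q k A E bE) =
      f.comp (st19q k A E bE) := by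
    apply MvPolynomial.algHom_ext
    rintro ⟨a, i⟩
    simp only [AlgHom.comp_apply]
    rw [st19bwd_q]
    unfold st19co
    rw [st19fwd_apply, map_sum, Finset.sum_apply']
    have hterm : ∀ j : Fin n, (bE.baseChange B).repr
        (f (st19q k A E bE (X (a, j))) ⊗ₜ[k] bE j) i =
        if j = i then f (st19q k A E bE (X (a, j))) else 0 := by
      intro j
      rw [st19co_tmul, bE.repr_self]
      by_cases h : j = i <;> simp [h, Finsupp.single_apply]
    rw [Finset.sum_congr rfl fun j _ => hterm j, Finset.sum_ite_eq' Finset.univ i]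
    simp
  ext x
  obtain ⟨p, rfl⟩ := hsurj x
  exact DFunLike.congr_fun hcomp p

lemma st19_right_inv (Φ : A →ₐ[k] B ⊗[k] E) :
    st19fwd bE B (st19bwd bE B Φ) = Φ := by
  ext a
  rw [st19fwd_apply]
  rw [Finset.sum_congr rfl fun i _ => by rw [st19bwd_q]]
  exact st19co_sum bE B Φ a

/-- The natural bijection. -/
def st19equiv : (st19AV k A E bE →ₐ[k] B) ≃ (A →ₐ[k] B ⊗[k] E) where
  toFun := st19fwd bE B
  invFun := st19bwd bE B
  left_inv := st19_left_inv bE B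
  right_inv := st19_right_inv bE B

lemma st19_natural (B₁ B₂ : Type) [CommRing B₁] [Algebra k B₁] [CommRing B₂] [Algebra k B₂]
    (g : B₁ →ₐ[k] B₂) (f : st19AV k A E bE →ₐ[k] B₁) :
    st19equiv bE B₂ (g.comp f) =
      (Algebra.TensorProduct.map g (AlgHom.id k E)).comp (st19equiv bE B₁ f) := by
  ext a
  show st19fwd bE B₂ (g.comp f) a =
    (Algebra.TensorProduct.map g (AlgHom.id k E)) (st19fwd bE B₁ f a)
  rw [st19fwd_apply, st19fwd_apply, map_sum]
  refine Finset.sum_congr rfl fun i _ => ?_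
  rw [Algebra.TensorProduct.map_tmul]
  rfl

end Stmt19Aux

/-- Let `A` be an associative unital algebra over a field `k` and `V` a
finite-dimensional `k`-vector space.  Then the functor `B ↦ Hom_{Alg_k}(A, B ⊗ End(V))` from
commutative `k`-algebras to sets is representable: there is a commutative `k`-algebra `A_V` and
a bijection `Hom_{CommAlg_k}(A_V, B) ≅ Hom_{Alg_k}(A, B ⊗ End(V))`, natural in `B`. -/
theorem stmt19 (k A V : Type) [Field k] [Ring A] [Algebra k A]
    [AddCommGroup V] [Module k V] [FiniteDimensional k V] :
    ∃ (AV : Type) (_ : CommRing AV) (_ : Algebra k AV)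
      (e : ∀ (B : Type) [CommRing B] [Algebra k B],
        (AV →ₐ[k] B) ≃ (A →ₐ[k] B ⊗[k] Module.End k V)),
      ∀ (B₁ B₂ : Type) [CommRing B₁] [Algebra k B₁] [CommRing B₂] [Algebra k B₂]
        (g : B₁ →ₐ[k] B₂) (f : AV →ₐ[k] B₁),
        e B₂ (g.comp f) =
          (Algebra.TensorProduct.map g (AlgHom.id k (Module.End k V))).comp (e B₁ f) := by
  classical
  let E := Module.End k V
  let bE : Module.Basis (Fin (Module.finrank k E)) k E := Module.finBasis k E
  exact ⟨st19AV k A E bE, inferInstance, inferInstance,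
    fun B _ _ => st19equiv bE B,
    fun B₁ B₂ _ _ _ _ g f => st19_natural bE B₁ B₂ g f⟩
end
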